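/- Let γ > 0 and α be real numbers, let (err_t)_{t≥1} be a sequence of real numbers, and let (α_t)_{t≥1} satisfy the online update rule α_{t+1} = α_t + γ(α − err_t) for all t ≥ 1. If the sequence (α_t) is bounded (in particular, if α_t ∈ [−γ, 1+γ] for all t), then the time-averaged error converges to the target level: lim_{T→∞} (1/T) · Σ_{t=1}^{T} err_t = α. -/

import Mathlib

open Filter

/-- OCP long-term coverage (Gibbs–Candès, Prop. 4.1): if
`α_{t+1} = α_t + γ(α − err_t)` and the sequence `(α_t)` is bounded, then the
time-averaged error converges to the target level `α`. -/
theorem ocp_longterm_coverage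
    (γ α : ℝ) (hγ : 0 < γ)
    (err αt : ℕ → ℝ)
    (hupd : ∀ t : ℕ, 1 ≤ t → αt (t + 1) = αt t + γ * (α - err t))
    (hbounded : ∃ M : ℝ, ∀ t : ℕ, 1 ≤ t → |αt t| ≤ M) :
    Tendsto (fun T : ℕ => (1 / (T : ℝ)) * ∑ t ∈ Finset.Icc 1 T, err t)
      atTop (nhds α) := by
  obtain ⟨M, hM⟩ := hbounded
  have key : ∀ T : ℕ, αt (T + 1) = αt 1 + γ * (T * α - ∑ t ∈ Finset.Icc 1 T, err t) := by
    intro T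
    induction T with
    | zero => simp
    | succ T ih =>
      rw [hupd (T + 1) (by omega), ih, Finset.sum_Icc_succ_top (by omega)]
      push_cast
      ring
  have hform : ∀ T : ℕ, 1 ≤ T →
      (1 / (T : ℝ)) * ∑ t ∈ Finset.Icc 1 T, err t
        = α + (αt 1 - αt (T + 1)) / (γ * T) := by
    intro T hT
    have hT0 : (T : ℝ) ≠ 0 := by positivity
    have hs : ∑ t ∈ Finset.Icc 1 T, err t = T * α - (αt (T + 1) - αt 1) / γ := by
      have := key T
      field_simp at this ⊢
      linarith
    rw [hs]
    field_simp
    ring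
  have hzero : Tendsto (fun T : ℕ => (αt 1 - αt (T + 1)) / (γ * T)) atTop (nhds 0) := by
    refine squeeze_zero_norm' (a := fun T : ℕ => (2 * M) / γ * (1 / T)) ?_ ?_
    · filter_upwards [eventually_ge_atTop 1] with T hT
      have h1 : |αt 1| ≤ M := hM 1 le_rfl
      have h2 : |αt (T + 1)| ≤ M := hM (T + 1) (by omega)
      have hTpos : (0 : ℝ) < T := by exact_mod_cast hT
      rw [Real.norm_eq_abs, abs_div, abs_of_pos (by positivity : (0:ℝ) < γ * T)]
      rw [div_le_iff₀ (by positivity)]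
      have : |αt 1 - αt (T + 1)| ≤ 2 * M := by
        calc |αt 1 - αt (T + 1)| ≤ |αt 1| + |αt (T + 1)| := abs_sub _ _
        _ ≤ 2 * M := by linarith
      calc |αt 1 - αt (T + 1)| ≤ 2 * M := this
      _ = 2 * M / γ * (1 / T) * (γ * T) := by field_simp
    · have := tendsto_one_div_atTop_nhds_zero_nat (𝕜 := ℝ)
      simpa using this.const_mul ((2 * M) / γ)
  have : Tendsto (fun T : ℕ => α + (αt 1 - αt (T + 1)) / (γ * T)) atTop (nhds (α + 0)) :=
    tendsto_const_nhds.add hzero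
  rw [add_zero] at this
  refine this.congr' ?_
  filter_upwards [eventually_ge_atTop 1] with T hT
  exact (hform T hT).symm
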